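/- Let s > 1, a, b, σ ≥ 1 be real numbers and v ∈ ℝ. Then there is a constant C depending only on s such that ∫_ℝ (a + |u − v|)^(−s) (b + σ⁻¹|u|)^(−s) du ≤ C [ (a + σ⁻¹|v|)^(−s+1) b^(−s+1) + a^(−s+1) (b + σ⁻¹|v|)^(−s) ]. -/

import Mathlib

open MeasureTheory Set Filter Real

private lemma halfline {s a c : ℝ} (hs : 1 < s) (hac : 0 < a + c) :
    IntegrableOn (fun u : ℝ => (a + u) ^ (-s)) (Ioi c) ∧
      ∫ u in Ioi c, (a + u) ^ (-s) = (a + c) ^ (1 - s) / (s - 1) := by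
  have hpos : ∀ x ∈ Ici c, 0 < a + x := fun x hx => lt_of_lt_of_le hac (by
    have := hx.out; linarith)
  have hs1 : (1 : ℝ) - s ≠ 0 := by intro h; nlinarith
  set g : ℝ → ℝ := fun u => (a + u) ^ (1 - s) / (1 - s) with hgdef
  have hderiv : ∀ x ∈ Ici c, HasDerivAt g ((a + x) ^ (-s)) x := by
    intro x hx
    have h1 : HasDerivAt (fun u : ℝ => a + u) 1 x := by
      simpa using (hasDerivAt_id x).const_add a
    have h2 := h1.rpow_const (p := 1 - s) (Or.inl (ne_of_gt (hpos x hx)))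
    have h3 := h2.div_const (1 - s)
    refine h3.congr_deriv ?_
    have he : (1 : ℝ) - s - 1 = -s := by ring
    rw [he]
    field_simp
  have htend : Tendsto g atTop (nhds 0) := by
    have h1 : Tendsto (fun u : ℝ => a + u) atTop atTop :=
      tendsto_atTop_add_const_left _ _ tendsto_id
    have h2 : Tendsto (fun x : ℝ => x ^ (1 - s)) atTop (nhds 0) := by
      have := tendsto_rpow_neg_atTop (y := s - 1) (by linarith)
      simpa [neg_sub] using this
    have h3 := (h2.comp h1).div_const (1 - s)
    simpa [hgdef, Function.comp] using h3
  have hnonneg : ∀ x ∈ Ioi c, 0 ≤ (a + x) ^ (-s) := fun x hx =>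
    rpow_nonneg (hpos x (le_of_lt (show c < x from hx))).le _
  refine ⟨integrableOn_Ioi_deriv_of_nonneg' hderiv hnonneg htend, ?_⟩
  rw [integral_Ioi_of_hasDerivAt_of_nonneg' hderiv hnonneg htend]
  simp only [hgdef]
  rw [zero_sub, show (1:ℝ) - s = -(s-1) by ring, div_neg, neg_neg]

private lemma tail {s a R : ℝ} (hs : 1 < s) (ha : 0 < a) (hR : 0 ≤ R) :
    IntegrableOn (fun u : ℝ => (a + |u|) ^ (-s)) {u : ℝ | R ≤ |u|} ∧
      ∫ u in {u : ℝ | R ≤ |u|}, (a + |u|) ^ (-s) = 2 * (a + R) ^ (1 - s) / (s - 1) := by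
  have hac : 0 < a + R := by linarith
  obtain ⟨hint, hval⟩ := halfline (a := a) (c := R) hs hac
  have hSeq : {u : ℝ | R ≤ |u|} = Iic (-R) ∪ Ici R := by
    ext u
    simp only [mem_setOf_eq, mem_union, mem_Iic, mem_Ici, le_abs, le_neg]
    tauto
  have hIoi : IntegrableOn (fun u : ℝ => (a + |u|) ^ (-s)) (Ioi R) := by
    refine hint.congr_fun (fun x hx => ?_) measurableSet_Ioi
    rw [abs_of_nonneg (le_of_lt (lt_of_le_of_lt hR hx))]
  have hIci : IntegrableOn (fun u : ℝ => (a + |u|) ^ (-s)) (Ici R) :=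
    (integrableOn_Ici_iff_integrableOn_Ioi (f := fun u : ℝ => (a + |u|) ^ (-s))).mpr hIoi
  have m : MeasurableEmbedding fun x : ℝ => -x :=
    (Homeomorph.neg ℝ).measurableEmbedding
  have hIic : IntegrableOn (fun u : ℝ => (a + |u|) ^ (-s)) (Iic (-R)) := by
    rw [show (volume : Measure ℝ) = Measure.map Neg.neg volume from
      (Measure.map_neg_eq_self (volume : Measure ℝ)).symm]
    rw [m.integrableOn_map_iff]
    have hpre : (fun x : ℝ => -x) ⁻¹' Iic (-R) = Ici R := by
      ext x; simp [neg_le]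
    simp only [Function.comp_def, abs_neg, hpre]
    exact hIci
  have hdisj : Disjoint (Iic (-R)) (Ici R) ∨ R = 0 := by
    rcases eq_or_lt_of_le hR with h | h
    · right; exact h.symm
    · left
      exact Iic_disjoint_Ici.mpr (by linarith)
  have hvIci : ∫ u in Ici R, (a + |u|) ^ (-s) = (a + R) ^ (1 - s) / (s - 1) := by
    rw [integral_Ici_eq_integral_Ioi]
    rw [setIntegral_congr_fun measurableSet_Ioi
      (fun x hx => by rw [abs_of_nonneg (le_of_lt (lt_of_le_of_lt hR hx))])]
    exact hval
  have hvIic : ∫ u in Iic (-R), (a + |u|) ^ (-s) = (a + R) ^ (1 - s) / (s - 1) := by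
    have h1 : ∫ u in Iic (-R), (a + |u|) ^ (-s)
        = ∫ u in Iic (-R), (fun x : ℝ => (a + |x|) ^ (-s)) (-u) := by
      refine setIntegral_congr_fun measurableSet_Iic (fun x _ => ?_)
      simp
    have h2 := integral_comp_neg_Iic (-R) (fun x : ℝ => (a + |x|) ^ (-s))
    rw [neg_neg] at h2
    rw [h1, h2, ← integral_Ici_eq_integral_Ioi, hvIci]
  have hadisj : MeasureTheory.AEDisjoint volume (Iic (-R)) (Ici R) := by
    show volume (Iic (-R) ∩ Ici R) = 0
    have h1 : Iic (-R) ∩ Ici R ⊆ Icc R (-R) := by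
      intro x hx
      exact ⟨hx.2, hx.1⟩
    refine measure_mono_null h1 ?_
    rw [Real.volume_Icc]
    exact ENNReal.ofReal_eq_zero.mpr (by linarith)
  constructor
  · rw [hSeq]; exact hIic.union hIci
  · rw [hSeq, integral_union_ae hadisj measurableSet_Ici.nullMeasurableSet hIic hIci,
      hvIic, hvIci]
    ring

set_option maxHeartbeats 1000000 in
theorem stmt_1 (s : ℝ) (hs : 1 < s) :
    ∃ C > 0, ∀ a b σ v : ℝ, 1 ≤ a → 1 ≤ b → 1 ≤ σ →
      ∫ u : ℝ, (a + |u - v|) ^ (-s) * (b + σ⁻¹ * |u|) ^ (-s) ≤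
        C * ((a + σ⁻¹ * |v|) ^ (-s + 1) * b ^ (-s + 1) + a ^ (-s + 1) * (b + σ⁻¹ * |v|) ^ (-s)) := by
  have hs1 : (0 : ℝ) < s - 1 := by linarith
  refine ⟨2 ^ (s + 1) / (s - 1), by positivity, ?_⟩
  intro a b σ v ha hb hσ
  have ha0 : (0 : ℝ) < a := by linarith
  have hb0 : (0 : ℝ) < b := by linarith
  have hσ0 : (0 : ℝ) < σ := by linarith
  have hσi : (0 : ℝ) < σ⁻¹ := by positivity
  have hσi1 : σ⁻¹ ≤ 1 := by
    rw [inv_le_one_iff₀]; right; exact hσ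
  have hR : (0:ℝ) ≤ |v| / 2 := by positivity
  -- tail facts
  obtain ⟨hFint0, hFval0⟩ := tail (a := a) (R := 0) hs ha0 le_rfl
  have huniv : {u : ℝ | (0 : ℝ) ≤ |u|} = Set.univ := by
    ext u; simp [abs_nonneg]
  rw [huniv] at hFint0 hFval0
  have hFint : Integrable (fun w : ℝ => (a + |w|) ^ (-s)) := integrableOn_univ.mp hFint0
  rw [Measure.restrict_univ] at hFval0
  obtain ⟨hFintR, hFvalR⟩ := tail (a := a) (R := |v| / 2) hs ha0 hR
  have hfint : Integrable (fun u : ℝ => (a + |u - v|) ^ (-s)) := hFint.comp_sub_right v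
  have hfpos : ∀ u : ℝ, 0 ≤ (a + |u - v|) ^ (-s) := fun u => rpow_nonneg (by positivity) _
  have hgpos : ∀ u : ℝ, 0 ≤ (b + σ⁻¹ * |u|) ^ (-s) := fun u => rpow_nonneg (by positivity) _
  have hgcont : Continuous (fun u : ℝ => (b + σ⁻¹ * |u|) ^ (-s)) := by
    apply Continuous.rpow_const
    · exact continuous_const.add (continuous_const.mul continuous_abs)
    · intro x; left; positivity
  have hgbd : ∀ u : ℝ, ‖(b + σ⁻¹ * |u|) ^ (-s)‖ ≤ 1 := by
    intro u
    rw [Real.norm_eq_abs, abs_of_nonneg (hgpos u)]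
    exact rpow_le_one_of_one_le_of_nonpos
      (by have := abs_nonneg u; nlinarith) (by linarith)
  have hprod : Integrable (fun u : ℝ => (a + |u - v|) ^ (-s) * (b + σ⁻¹ * |u|) ^ (-s)) := by
    have h := hfint.bdd_mul hgcont.aestronglyMeasurable (Filter.Eventually.of_forall hgbd)
    simpa [mul_comm] using h
  have hAm : MeasurableSet {u : ℝ | |v| / 2 ≤ |u - v|} :=
    measurableSet_le measurable_const ((continuous_id.sub continuous_const).abs).measurable
  have hBm : MeasurableSet {u : ℝ | |v| / 2 ≤ |u|} :=
    measurableSet_le measurable_const continuous_abs.measurable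
  have hsplit : ∫ u : ℝ, (a + |u - v|) ^ (-s) * (b + σ⁻¹ * |u|) ^ (-s)
      = (∫ u in {u : ℝ | |v| / 2 ≤ |u - v|}, (a + |u - v|) ^ (-s) * (b + σ⁻¹ * |u|) ^ (-s))
        + ∫ u in {u : ℝ | |v| / 2 ≤ |u - v|}ᶜ, (a + |u - v|) ^ (-s) * (b + σ⁻¹ * |u|) ^ (-s) :=
    (integral_add_compl hAm hprod).symm
  have hfull : ∫ u : ℝ, (a + |u - v|) ^ (-s) = 2 * a ^ (1 - s) / (s - 1) := by
    have h1 : ∫ u : ℝ, (a + |u - v|) ^ (-s) = ∫ w : ℝ, (a + |w|) ^ (-s) :=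
      integral_sub_right_eq_self (fun w : ℝ => (a + |w|) ^ (-s)) v
    rw [h1, hFval0, add_zero]
  have hintA : ∫ u in {u : ℝ | |v| / 2 ≤ |u - v|}, (a + |u - v|) ^ (-s)
      = 2 * (a + |v| / 2) ^ (1 - s) / (s - 1) := by
    have h1 : ∫ u in {u : ℝ | |v| / 2 ≤ |u - v|}, (a + |u - v|) ^ (-s)
        = ∫ u : ℝ, Set.indicator {u : ℝ | |v| / 2 ≤ |u - v|}
            (fun u => (a + |u - v|) ^ (-s)) u := (integral_indicator hAm).symm
    have h2 : ∫ u in {u : ℝ | |v| / 2 ≤ |u|}, (a + |u|) ^ (-s)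
        = ∫ u : ℝ, Set.indicator {u : ℝ | |v| / 2 ≤ |u|}
            (fun u => (a + |u|) ^ (-s)) u := (integral_indicator hBm).symm
    have h3 : ∀ u : ℝ, Set.indicator {u : ℝ | |v| / 2 ≤ |u - v|}
          (fun u => (a + |u - v|) ^ (-s)) u
        = Set.indicator {u : ℝ | |v| / 2 ≤ |u|} (fun u => (a + |u|) ^ (-s)) (u - v) := by
      intro u
      by_cases hu : |v| / 2 ≤ |u - v|
      · rw [Set.indicator_of_mem (show u ∈ {u : ℝ | |v| / 2 ≤ |u - v|} from hu),
          Set.indicator_of_mem (show u - v ∈ {u : ℝ | |v| / 2 ≤ |u|} from hu)]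
      · rw [Set.indicator_of_notMem (show u ∉ {u : ℝ | |v| / 2 ≤ |u - v|} from hu),
          Set.indicator_of_notMem (show u - v ∉ {u : ℝ | |v| / 2 ≤ |u|} from hu)]
    rw [h1]
    simp_rw [h3]
    rw [integral_sub_right_eq_self
      (Set.indicator {u : ℝ | |v| / 2 ≤ |u|} (fun u => (a + |u|) ^ (-s))) v, ← h2]
    exact hFvalR
  -- bound on A
  have hgA : ∀ u : ℝ, (b + σ⁻¹ * |u|) ^ (-s) ≤ b ^ (1 - s) := by
    intro u
    calc (b + σ⁻¹ * |u|) ^ (-s) ≤ b ^ (-s) := by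
          refine rpow_le_rpow_of_nonpos hb0 ?_ (by linarith)
          have := abs_nonneg u; nlinarith
      _ ≤ b ^ (1 - s) := rpow_le_rpow_of_exponent_le hb (by linarith)
  have hbA : ∫ u in {u : ℝ | |v| / 2 ≤ |u - v|},
        (a + |u - v|) ^ (-s) * (b + σ⁻¹ * |u|) ^ (-s)
      ≤ b ^ (1 - s) * (2 * (a + |v| / 2) ^ (1 - s) / (s - 1)) := by
    calc ∫ u in {u : ℝ | |v| / 2 ≤ |u - v|},
          (a + |u - v|) ^ (-s) * (b + σ⁻¹ * |u|) ^ (-s)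
        ≤ ∫ u in {u : ℝ | |v| / 2 ≤ |u - v|}, (a + |u - v|) ^ (-s) * b ^ (1 - s) := by
          refine setIntegral_mono_on hprod.integrableOn
            ((hfint.mul_const _).integrableOn) hAm (fun u _ => ?_)
          exact mul_le_mul_of_nonneg_left (hgA u) (hfpos u)
      _ = (∫ u in {u : ℝ | |v| / 2 ≤ |u - v|}, (a + |u - v|) ^ (-s)) * b ^ (1 - s) :=
          integral_mul_const _ _
      _ = b ^ (1 - s) * (2 * (a + |v| / 2) ^ (1 - s) / (s - 1)) := by rw [hintA]; ring
  -- Aᶜ ⊆ B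
  have hcsub : {u : ℝ | |v| / 2 ≤ |u - v|}ᶜ ⊆ {u : ℝ | |v| / 2 ≤ |u|} := by
    intro u hu
    simp only [Set.mem_compl_iff, Set.mem_setOf_eq, not_le] at hu
    show |v| / 2 ≤ |u|
    have h1 : |v| ≤ |u| + |u - v| := by
      calc |v| = |u - (u - v)| := by ring_nf
        _ ≤ |u| + |u - v| := abs_sub _ _
    linarith
  have hb2 : ∫ u in {u : ℝ | |v| / 2 ≤ |u - v|}ᶜ,
        (a + |u - v|) ^ (-s) * (b + σ⁻¹ * |u|) ^ (-s)
      ≤ ∫ u in {u : ℝ | |v| / 2 ≤ |u|},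
        (a + |u - v|) ^ (-s) * (b + σ⁻¹ * |u|) ^ (-s) := by
    refine setIntegral_mono_set hprod.integrableOn
      (Filter.Eventually.of_forall fun u => mul_nonneg (hfpos u) (hgpos u))
      (HasSubset.Subset.eventuallyLE hcsub)
  -- bound on B
  have hY : (0 : ℝ) < b + σ⁻¹ * |v| := by positivity
  have hgB : ∀ u ∈ {u : ℝ | |v| / 2 ≤ |u|},
      (b + σ⁻¹ * |u|) ^ (-s) ≤ 2 ^ s * (b + σ⁻¹ * |v|) ^ (-s) := by
    intro u hu
    have huR : |v| / 2 ≤ |u| := hu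
    have h1 : (b + σ⁻¹ * |v|) / 2 ≤ b + σ⁻¹ * |u| := by nlinarith
    have h3 : (b + σ⁻¹ * |u|) ^ (-s) ≤ ((b + σ⁻¹ * |v|) / 2) ^ (-s) :=
      rpow_le_rpow_of_nonpos (by positivity) h1 (by linarith)
    have h4 : ((b + σ⁻¹ * |v|) / 2) ^ (-s) = 2 ^ s * (b + σ⁻¹ * |v|) ^ (-s) := by
      rw [Real.div_rpow hY.le (by norm_num : (0:ℝ) ≤ 2),
        Real.rpow_neg (by norm_num : (0:ℝ) ≤ 2), div_eq_mul_inv, inv_inv]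
      ring
    linarith
  have hbB : ∫ u in {u : ℝ | |v| / 2 ≤ |u|},
        (a + |u - v|) ^ (-s) * (b + σ⁻¹ * |u|) ^ (-s)
      ≤ 2 ^ s * (b + σ⁻¹ * |v|) ^ (-s) * (2 * a ^ (1 - s) / (s - 1)) := by
    calc ∫ u in {u : ℝ | |v| / 2 ≤ |u|},
          (a + |u - v|) ^ (-s) * (b + σ⁻¹ * |u|) ^ (-s)
        ≤ ∫ u in {u : ℝ | |v| / 2 ≤ |u|},
            (a + |u - v|) ^ (-s) * (2 ^ s * (b + σ⁻¹ * |v|) ^ (-s)) := by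
          refine setIntegral_mono_on hprod.integrableOn
            ((hfint.mul_const _).integrableOn) hBm (fun u hu => ?_)
          exact mul_le_mul_of_nonneg_left (hgB u hu) (hfpos u)
      _ = (∫ u in {u : ℝ | |v| / 2 ≤ |u|}, (a + |u - v|) ^ (-s))
            * (2 ^ s * (b + σ⁻¹ * |v|) ^ (-s)) := integral_mul_const _ _
      _ ≤ (∫ u : ℝ, (a + |u - v|) ^ (-s)) * (2 ^ s * (b + σ⁻¹ * |v|) ^ (-s)) := by
          refine mul_le_mul_of_nonneg_right
            (setIntegral_le_integral hfint (Filter.Eventually.of_forall hfpos)) (by positivity)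
      _ = 2 ^ s * (b + σ⁻¹ * |v|) ^ (-s) * (2 * a ^ (1 - s) / (s - 1)) := by
          rw [hfull]; ring
  -- comparison
  have hX : (0 : ℝ) < a + σ⁻¹ * |v| := by positivity
  have hABcomp : (a + |v| / 2) ^ (1 - s) ≤ 2 ^ (s - 1) * (a + σ⁻¹ * |v|) ^ (1 - s) := by
    have h1 : (a + σ⁻¹ * |v|) / 2 ≤ a + |v| / 2 := by nlinarith [abs_nonneg v]
    have h2 : (a + |v| / 2) ^ (1 - s) ≤ ((a + σ⁻¹ * |v|) / 2) ^ (1 - s) :=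
      rpow_le_rpow_of_nonpos (by positivity) h1 (by linarith)
    have h3 : ((a + σ⁻¹ * |v|) / 2) ^ (1 - s) = 2 ^ (s - 1) * (a + σ⁻¹ * |v|) ^ (1 - s) := by
      rw [Real.div_rpow hX.le (by norm_num : (0:ℝ) ≤ 2),
        show (s : ℝ) - 1 = -(1 - s) by ring, Real.rpow_neg (by norm_num : (0:ℝ) ≤ 2),
        div_eq_mul_inv]
      ring
    linarith
  -- assemble
  rw [show -s + 1 = 1 - s by ring]
  have e1 : (2 : ℝ) ^ (s + 1) = 2 * 2 ^ s := by
    rw [Real.rpow_add (by norm_num : (0:ℝ) < 2), Real.rpow_one]; ring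
  have e2 : (2 : ℝ) ^ (s - 1) = 2 ^ s / 2 := by
    rw [Real.rpow_sub (by norm_num : (0:ℝ) < 2), Real.rpow_one]
  have p1 : (0 : ℝ) ≤ b ^ (1 - s) := rpow_nonneg hb0.le _
  have p2 : (0 : ℝ) ≤ (b + σ⁻¹ * |v|) ^ (-s) := rpow_nonneg hY.le _
  have p3 : (0 : ℝ) ≤ a ^ (1 - s) := rpow_nonneg ha0.le _
  have p4 : (0 : ℝ) ≤ (a + σ⁻¹ * |v|) ^ (1 - s) := rpow_nonneg hX.le _
  have p5 : (0 : ℝ) < (2 : ℝ) ^ s := rpow_pos_of_pos (by norm_num) _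
  have key : b ^ (1 - s) * (2 * (a + |v| / 2) ^ (1 - s))
        + 2 ^ s * (b + σ⁻¹ * |v|) ^ (-s) * (2 * a ^ (1 - s))
      ≤ 2 ^ (s + 1) * ((a + σ⁻¹ * |v|) ^ (1 - s) * b ^ (1 - s)
        + a ^ (1 - s) * (b + σ⁻¹ * |v|) ^ (-s)) := by
    rw [e1]
    rw [e2] at hABcomp
    have h6 := mul_le_mul_of_nonneg_left hABcomp p1
    have h7 : (0:ℝ) ≤ 2 ^ s * ((a + σ⁻¹ * |v|) ^ (1 - s) * b ^ (1 - s)) :=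
      mul_nonneg p5.le (mul_nonneg p4 p1)
    nlinarith [h6, h7]
  calc ∫ u : ℝ, (a + |u - v|) ^ (-s) * (b + σ⁻¹ * |u|) ^ (-s)
      = _ := hsplit
    _ ≤ b ^ (1 - s) * (2 * (a + |v| / 2) ^ (1 - s) / (s - 1))
        + 2 ^ s * (b + σ⁻¹ * |v|) ^ (-s) * (2 * a ^ (1 - s) / (s - 1)) :=
        add_le_add hbA (le_trans hb2 hbB)
    _ = (b ^ (1 - s) * (2 * (a + |v| / 2) ^ (1 - s))
        + 2 ^ s * (b + σ⁻¹ * |v|) ^ (-s) * (2 * a ^ (1 - s))) / (s - 1) := by ring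
    _ ≤ (2 ^ (s + 1) * ((a + σ⁻¹ * |v|) ^ (1 - s) * b ^ (1 - s)
        + a ^ (1 - s) * (b + σ⁻¹ * |v|) ^ (-s))) / (s - 1) :=
        (div_le_div_iff_of_pos_right hs1).mpr key
    _ = 2 ^ (s + 1) / (s - 1) * ((a + σ⁻¹ * |v|) ^ (1 - s) * b ^ (1 - s)
        + a ^ (1 - s) * (b + σ⁻¹ * |v|) ^ (-s)) := by ring
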